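/- Let 0 → B →^i A →^j D → 0 be an extension of Banach algebras where both B and D have bounded approximate identities (e.g. an extension of C*-algebras). Then the Banach Bar cohomology groups satisfy HR^n(A) = HR^n(D) for all n ≥ 0; in fact both vanish, hence A also has vanishing Bar cohomology. -/

import Mathlib

open NormedSpace Filter

noncomputable section

/-- A Banach space `T` together with a bounded `n`-linear map `φ : Aⁿ → T` is *the*
`n`-fold projective tensor power `A^⊗̂n`. -/
structure IsProjectiveTensorPower
    (A : Type*) [NormedAddCommGroup A] [NormedSpace ℝ A]
    (n : ℕ)
    (T : Type*) [NormedAddCommGroup T] [NormedSpace ℝ T] [CompleteSpace T]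
    (φ : ContinuousMultilinearMap ℝ (fun _ : Fin n => A) T) : Prop where
  dense : (Submodule.span ℝ (Set.range ⇑φ)).topologicalClosure = ⊤
  lift : ∀ (W : Type) [NormedAddCommGroup W] [NormedSpace ℝ W] [CompleteSpace W]
      (m : ContinuousMultilinearMap ℝ (fun _ : Fin n => A) W),
      ∃ g : T →L[ℝ] W, (∀ v, g (φ v) = m v) ∧ ‖g‖ = ‖m‖

/-- The k-th face of an elementary (n+2)-tensor: a₀ ⊗ ⋯ ⊗ a_k a_{k+1} ⊗ ⋯ ⊗ a_{n+1}. -/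
def hochschildFace {A : Type*} [Mul A] {n : ℕ} (v : Fin (n + 2) → A) (k : Fin (n + 1)) :
    Fin (n + 1) → A := fun m =>
  if (m : ℕ) < (k : ℕ) then v m.castSucc
  else if (m : ℕ) = (k : ℕ) then v k.castSucc * v k.succ
  else v m.succ

/-- A Banach algebra has a (two-sided) bounded approximate identity. -/
def HasBoundedApproxIdentity (A : Type*) [NormedRing A] : Prop :=
  ∃ (ι : Type) (l : Filter ι) (e : ι → A), l.NeBot ∧
    (∃ C : ℝ, ∀ α, ‖e α‖ ≤ C) ∧
    (∀ a : A, Tendsto (fun α => a * e α) l (nhds a)) ∧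
    (∀ a : A, Tendsto (fun α => e α * a) l (nhds a))



/-! ### Auxiliary lemmas -/

lemma face_cons_zero {D : Type*} [Mul D] {n : ℕ} (e : D) (v : Fin (n + 2) → D) :
    hochschildFace (Fin.cons e v) 0 = Function.update v 0 (e * v 0) := by
  funext m
  induction m using Fin.cases with
  | zero => simp [hochschildFace, Fin.succ_zero_eq_one]
  | succ i =>
      simp [hochschildFace, Function.update_apply, Fin.succ_ne_zero]

lemma face_cons_succ {D : Type*} [Mul D] {n : ℕ} (e : D) (v : Fin (n + 2) → D) (k : Fin (n + 1)) :
    hochschildFace (Fin.cons e v) k.succ = Fin.cons e (hochschildFace v k) := by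
  funext m
  induction m using Fin.cases with
  | zero => simp [hochschildFace]
  | succ i =>
      simp only [hochschildFace, Fin.cons_succ, Fin.val_succ]
      by_cases h1 : (i : ℕ) < (k : ℕ)
      · simp [h1, Nat.succ_lt_succ h1, ← Fin.succ_castSucc]
      · by_cases h2 : (i : ℕ) = (k : ℕ)
        · simp [h1, h2, ← Fin.succ_castSucc]
        · simp [h1, h2, Nat.succ_lt_succ_iff, Nat.succ_inj]

lemma face_one {D : Type*} [Mul D] (v : Fin 2 → D) :
    hochschildFace v 0 = fun _ => v 0 * v 1 := by
  funext m
  have hm : m = 0 := Fin.fin_one_eq_zero m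
  subst hm
  simp [hochschildFace]

lemma exists_weakStarLimit {ι : Type} (U : Ultrafilter ι) {X : Type*}
    [NormedAddCommGroup X] [NormedSpace ℝ X]
    (F : ι → X →L[ℝ] ℝ) (K : ℝ) (hK : ∀ α, ‖F α‖ ≤ K) :
    ∃ f : X →L[ℝ] ℝ, ∀ x, Tendsto (fun α => F α x) ↑U (nhds (f x)) := by
  have hKx : ∀ (x : X) α, F α x ∈ Set.Icc (-(K * ‖x‖)) (K * ‖x‖) := by
    intro x α
    have h1 : ‖F α x‖ ≤ K * ‖x‖ :=
      le_trans ((F α).le_opNorm x) (mul_le_mul_of_nonneg_right (hK α) (norm_nonneg x))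
    rw [Real.norm_eq_abs] at h1
    exact Set.mem_Icc.mpr (abs_le.mp h1)
  have hlim : ∀ x : X, ∃ L ∈ Set.Icc (-(K * ‖x‖)) (K * ‖x‖),
      Tendsto (fun α => F α x) ↑U (nhds L) := by
    intro x
    obtain ⟨L, hL1, hL2⟩ := (isCompact_Icc (a := -(K * ‖x‖)) (b := K * ‖x‖)).ultrafilter_le_nhds
      (U.map (fun α => F α x))
      (by
        rw [Ultrafilter.coe_map, Filter.le_principal_iff, Filter.mem_map]
        exact Filter.Eventually.of_forall (fun α => hKx x α))
    refine ⟨L, hL1, ?_⟩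
    rwa [Filter.Tendsto, ← Ultrafilter.coe_map]
  choose L hmem hL using hlim
  have hadd : ∀ x y, L (x + y) = L x + L y := by
    intro x y
    refine tendsto_nhds_unique (hL (x + y)) ?_
    have := (hL x).add (hL y)
    simpa [map_add] using this
  have hsmul : ∀ (r : ℝ) (x : X), L (r • x) = r * L x := by
    intro r x
    refine tendsto_nhds_unique (hL (r • x)) ?_
    have := (hL x).const_mul r
    simpa [map_smul, smul_eq_mul] using this
  let flin : X →ₗ[ℝ] ℝ :=
    { toFun := L, map_add' := hadd, map_smul' := hsmul }
  refine ⟨flin.mkContinuous K (fun x => ?_), fun x => hL x⟩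
  rw [Real.norm_eq_abs, abs_le]
  exact ⟨(hmem x).1, (hmem x).2⟩


theorem bar_exact_of_bai {D : Type*} [NormedRing D] [NormedAlgebra ℝ D] [CompleteSpace D]
    (hD : HasBoundedApproxIdentity D)
    (TD : ℕ → Type)
    [∀ n, NormedAddCommGroup (TD n)] [∀ n, NormedSpace ℝ (TD n)] [∀ n, CompleteSpace (TD n)]
    (φD : ∀ n, ContinuousMultilinearMap ℝ (fun _ : Fin (n + 1) => D) (TD n))
    (hTD : ∀ n, IsProjectiveTensorPower D (n + 1) (TD n) (φD n))
    (drD : ∀ n, TD (n + 1) →L[ℝ] TD n)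
    (hdrD : ∀ n (v : Fin (n + 2) → D),
      drD n (φD (n + 1) v) = ∑ k : Fin (n + 1), ((-1 : ℝ) ^ (k : ℕ)) • φD n (hochschildFace v k)) :
    Function.Injective (fun f : StrongDual ℝ (TD 0) => f.comp (drD 0)) ∧
      ∀ n (g : StrongDual ℝ (TD (n + 1))), g.comp (drD (n + 1)) = 0 →
        ∃ f : StrongDual ℝ (TD n), f.comp (drD n) = g := by
  obtain ⟨ι, l, e, hne, ⟨C₀, hC₀⟩, hright, hleft⟩ := hD
  haveI := hne
  set C : ℝ := max C₀ 0 with hCdef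
  have hC : ∀ α, ‖e α‖ ≤ C := fun α => (hC₀ α).trans (le_max_left _ _)
  have hC0 : (0:ℝ) ≤ C := le_max_right _ _
  have hdense : ∀ n, Dense (Submodule.span ℝ (Set.range ⇑(φD n)) : Set (TD n)) := fun n =>
    Submodule.dense_iff_topologicalClosure_eq_top.mpr (hTD n).dense
  constructor
  · -- injectivity of f ↦ f ∘ dr₀
    intro f₁ f₂ hf
    have hf' : ∀ y, f₁ (drD 0 y) = f₂ (drD 0 y) := by
      intro y
      have := ContinuousLinearMap.ext_iff.mp hf y
      simpa using this
    refine ContinuousLinearMap.ext_on (hdense 0) ?_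
    rintro _ ⟨v, rfl⟩
    have hv : (fun _ : Fin 1 => v 0) = v := by
      funext m; rw [Fin.fin_one_eq_zero m]
    have hc : Continuous fun d : D => (φD 0) (fun _ : Fin 1 => d) :=
      (φD 0).coe_continuous.comp (continuous_pi fun _ => continuous_id)
    have htends : Tendsto (fun α => (φD 0) (fun _ : Fin 1 => v 0 * e α)) l
        (nhds ((φD 0) v)) := by
      have h := (hc.tendsto (v 0)).comp (hright (v 0))
      rw [hv] at h
      exact h
    have hkey : ∀ α, (φD 0) (fun _ : Fin 1 => v 0 * e α)
        = drD 0 ((φD 1) (Fin.cons (v 0) (fun _ : Fin 1 => e α))) := by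
      intro α
      rw [hdrD 0 (Fin.cons (v 0) (fun _ : Fin 1 => e α)), Fin.sum_univ_one, face_one]
      simp [Fin.cons_zero, Fin.cons_succ]
    have t1 : Tendsto (fun α => f₁ ((φD 0) (fun _ : Fin 1 => v 0 * e α))) l
        (nhds (f₁ ((φD 0) v))) := (f₁.continuous.tendsto _).comp htends
    have t2 : Tendsto (fun α => f₂ ((φD 0) (fun _ : Fin 1 => v 0 * e α))) l
        (nhds (f₂ ((φD 0) v))) := (f₂.continuous.tendsto _).comp htends
    have t2' : Tendsto (fun α => f₁ ((φD 0) (fun _ : Fin 1 => v 0 * e α))) l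
        (nhds (f₂ ((φD 0) v))) := by
      refine t2.congr fun α => ?_
      rw [hkey α, hf' ]
    exact tendsto_nhds_unique t1 t2'
  · -- surjectivity in higher degrees
    intro n g hg
    have hg' : ∀ y, g (drD (n + 1) y) = 0 := by
      intro y
      have := ContinuousLinearMap.ext_iff.mp hg y
      simpa using this
    -- the contracting operators
    have hSex : ∀ (m : ℕ) (α : ι), ∃ S : TD m →L[ℝ] TD (m + 1),
        (∀ v : Fin (m + 1) → D, S (φD m v) = φD (m + 1) (Fin.cons (e α) v)) ∧
        ‖S‖ ≤ ‖φD (m + 1)‖ * C := by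
      intro m α
      have hmm : ∀ v : Fin (m + 1) → D,
          ((φD (m + 1)).curryLeft (e α)) v = φD (m + 1) (Fin.cons (e α) v) := fun v =>
        (φD (m + 1)).curryLeft_apply (e α) v
      obtain ⟨S, hS1, hS2⟩ := (hTD m).lift (TD (m + 1)) ((φD (m + 1)).curryLeft (e α))
      refine ⟨S, fun v => by rw [hS1 v, hmm], ?_⟩
      rw [hS2]
      refine ContinuousMultilinearMap.opNorm_le_bound (mul_nonneg (norm_nonneg _) hC0) ?_
      intro v
      rw [hmm v]
      have hw : (Fin.cons (e α) v : Fin (m + 2) → D) = Fin.cons (e α) v := rfl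
      have step1 : ‖φD (m + 1) (Fin.cons (e α) v)‖
          ≤ ‖φD (m + 1)‖ * ∏ i : Fin (m + 2), ‖(Fin.cons (e α) v : Fin (m + 2) → D) i‖ :=
        (φD (m + 1)).le_opNorm (Fin.cons (e α) v : Fin (m + 2) → D)
      have step2 : ∏ i : Fin (m + 2), ‖(Fin.cons (e α) v : Fin (m + 2) → D) i‖
          = ‖e α‖ * ∏ i : Fin (m + 1), ‖v i‖ := by
        rw [Fin.prod_univ_succ]
        simp only [Fin.cons_zero, Fin.cons_succ]
      rw [step2] at step1
      refine step1.trans ?_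
      have hp : (0:ℝ) ≤ ∏ i : Fin (m + 1), ‖v i‖ :=
        Finset.prod_nonneg fun i _ => norm_nonneg _
      calc ‖φD (m + 1)‖ * (‖e α‖ * ∏ i : Fin (m + 1), ‖v i‖)
          ≤ ‖φD (m + 1)‖ * (C * ∏ i : Fin (m + 1), ‖v i‖) :=
            mul_le_mul_of_nonneg_left (mul_le_mul_of_nonneg_right (hC α) hp) (norm_nonneg _)
        _ = ‖φD (m + 1)‖ * C * ∏ i : Fin (m + 1), ‖v i‖ := by ring
    choose S hS1 hS2 using hSex
    -- key homotopy identity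
    have key : ∀ (α : ι) (v : Fin (n + 2) → D),
        S n α (drD n (φD (n + 1) v)) =
          φD (n + 1) (Function.update v 0 (e α * v 0))
            - drD (n + 1) (S (n + 1) α (φD (n + 1) v)) := by
      intro α v
      have A1 : S n α (drD n (φD (n + 1) v))
          = ∑ k : Fin (n + 1), ((-1:ℝ) ^ (k:ℕ)) •
              φD (n + 1) (Fin.cons (e α) (hochschildFace v k)) := by
        rw [hdrD n v, map_sum]
        refine Finset.sum_congr rfl fun k _ => ?_
        rw [map_smul, hS1 n α]
      have A2 : drD (n + 1) (S (n + 1) α (φD (n + 1) v))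
          = φD (n + 1) (Function.update v 0 (e α * v 0))
            - ∑ k : Fin (n + 1), ((-1:ℝ) ^ (k:ℕ)) •
                φD (n + 1) (Fin.cons (e α) (hochschildFace v k)) := by
        rw [hS1 (n + 1) α v, hdrD (n + 1) (Fin.cons (e α) v), Fin.sum_univ_succ]
        have h0 : ((-1:ℝ) ^ (((0 : Fin (n + 2))):ℕ)) •
            φD (n + 1) (hochschildFace (Fin.cons (e α) v) 0)
            = φD (n + 1) (Function.update v 0 (e α * v 0)) := by
          rw [face_cons_zero]
          simp
        have hs : ∀ k : Fin (n + 1), ((-1:ℝ) ^ ((Fin.succ k : Fin (n + 2)):ℕ)) •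
            φD (n + 1) (hochschildFace (Fin.cons (e α) v) k.succ)
            = -(((-1:ℝ) ^ (k:ℕ)) • φD (n + 1) (Fin.cons (e α) (hochschildFace v k))) := by
          intro k
          rw [face_cons_succ, Fin.val_succ, pow_succ, mul_neg_one, neg_smul]
        rw [h0, Finset.sum_congr rfl (fun k _ => hs k), Finset.sum_neg_distrib,
          ← sub_eq_add_neg]
      rw [A1, A2, sub_sub_cancel]
    -- weak-* limit of g ∘ Sₙ
    set K : ℝ := ‖g‖ * (‖φD (n + 1)‖ * C) with hKdef
    set F : ι → TD n →L[ℝ] ℝ := fun α => g.comp (S n α) with hFdef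
    have hKF : ∀ α, ‖F α‖ ≤ K := by
      intro α
      calc ‖F α‖ ≤ ‖g‖ * ‖S n α‖ := ContinuousLinearMap.opNorm_comp_le _ _
        _ ≤ K := by rw [hKdef]; exact mul_le_mul_of_nonneg_left (hS2 n α) (norm_nonneg g)
    obtain ⟨U, hU⟩ := exists_ultrafilter_le l
    obtain ⟨f, hf⟩ := exists_weakStarLimit U F K hKF
    refine ⟨f, ?_⟩
    refine ContinuousLinearMap.ext_on (hdense (n + 1)) ?_
    rintro _ ⟨v, rfl⟩
    show f (drD n (φD (n + 1) v)) = g (φD (n + 1) v)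
    have h1 : ∀ α, F α (drD n (φD (n + 1) v))
        = g (φD (n + 1) (Function.update v 0 (e α * v 0))) := by
      intro α
      rw [hFdef]
      simp only [ContinuousLinearMap.comp_apply, key α v, map_sub, hg', sub_zero]
    have hup : Continuous fun d : D => Function.update v 0 d := by
      refine continuous_pi fun m => ?_
      rcases eq_or_ne m 0 with h | h
      · subst h; simpa using continuous_id'
      · simpa [Function.update_of_ne h] using (continuous_const : Continuous fun _ : D => v m)
    have h2 : Tendsto (fun α => g (φD (n + 1) (Function.update v 0 (e α * v 0)))) l
        (nhds (g (φD (n + 1) v))) := by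
      have hc : Continuous fun d : D => g (φD (n + 1) (Function.update v 0 d)) :=
        g.continuous.comp ((φD (n + 1)).coe_continuous.comp hup)
      have h := (hc.tendsto (v 0)).comp (hleft (v 0))
      simpa [Function.update_eq_self, Function.comp_def] using h
    have h3 : Tendsto (fun α => F α (drD n (φD (n + 1) v))) (↑U)
        (nhds (g (φD (n + 1) v))) := by
      refine ((h2.mono_left hU).congr fun α => ?_)
      rw [h1 α]
    exact tendsto_nhds_unique (hf _) h3

set_option maxHeartbeats 1000000 in
lemma hasBAI_of_extension {B A D : Type*}
    [NormedRing B] [NormedAlgebra ℝ B] [CompleteSpace B]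
    [NormedRing A] [NormedAlgebra ℝ A] [CompleteSpace A]
    [NormedRing D] [NormedAlgebra ℝ D] [CompleteSpace D]
    (i : B →ₐ[ℝ] A) (j : A →ₐ[ℝ] D)
    (hi_cont : Continuous i) (hj_cont : Continuous j)
    (hj : Function.Surjective j)
    (hexact : ∀ a : A, j a = 0 ↔ ∃ b, i b = a)
    (hB : HasBoundedApproxIdentity B) (hD : HasBoundedApproxIdentity D) :
    HasBoundedApproxIdentity A := by
  obtain ⟨ιB, lB, eB, hneB, ⟨CB₀, hCB₀⟩, hBr, hBl⟩ := hB
  obtain ⟨ιD, lD, eD, hneD, ⟨CD₀, hCD₀⟩, hDr, hDl⟩ := hD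
  haveI := hneB; haveI := hneD
  set CB : ℝ := max CB₀ 0 with hCBdef
  set CD : ℝ := max CD₀ 0 with hCDdef
  have hCB : ∀ β, ‖eB β‖ ≤ CB := fun β => (hCB₀ β).trans (le_max_left _ _)
  have hCD : ∀ α, ‖eD α‖ ≤ CD := fun α => (hCD₀ α).trans (le_max_left _ _)
  have hCB0 : (0:ℝ) ≤ CB := le_max_right _ _
  have hCD0 : (0:ℝ) ≤ CD := le_max_right _ _
  set i' : B →L[ℝ] A := ⟨i.toLinearMap, hi_cont⟩ with hi'def
  set j' : A →L[ℝ] D := ⟨j.toLinearMap, hj_cont⟩ with hj'def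
  have hij : ∀ b, i' b = i b := fun _ => rfl
  have hjj : ∀ a, j' a = j a := fun _ => rfl
  obtain ⟨K, hKpos, hK⟩ := j'.exists_preimage_norm_le (fun d => by
    obtain ⟨a, ha⟩ := hj d; exact ⟨a, by rw [hjj, ha]⟩)
  set Ci : ℝ := ‖i'‖ with hCidef
  have hCi0 : (0:ℝ) ≤ Ci := norm_nonneg _
  have hi_norm : ∀ b, ‖i b‖ ≤ Ci * ‖b‖ := fun b => by rw [← hij]; exact i'.le_opNorm b
  have happrox : ∀ x : A, ∃ b : B, ‖x - i b‖ ≤ K * ‖j x‖ := by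
    intro x
    obtain ⟨a, ha1, ha2⟩ := hK (j' x)
    have h0 : j (x - a) = 0 := by
      rw [map_sub, ← hjj, ← hjj, ha1, sub_self]
    obtain ⟨b, hb⟩ := (hexact _).mp h0
    refine ⟨b, ?_⟩
    have : x - i b = a := by rw [hb]; exact sub_sub_cancel x a
    rw [this, ← hjj]
    exact ha2
  choose u hu1 hu2 using fun α => hK (eD α)
  have hju : ∀ α, j (u α) = eD α := fun α => by rw [← hjj]; exact hu1 α
  have hu3 : ∀ α, ‖u α‖ ≤ K * CD := fun α =>
    (hu2 α).trans (mul_le_mul_of_nonneg_left (hCD α) hKpos.le)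
  have hicb : ∀ β, ‖i (eB β)‖ ≤ Ci * CB := fun β =>
    (hi_norm _).trans (mul_le_mul_of_nonneg_left (hCB β) hCi0)
  set CR : ℝ := K * CD + Ci * CB + K * CD * (Ci * CB) with hCRdef
  have hCR0 : (0:ℝ) ≤ CR := by positivity
  set w : ιD × ιB → A := fun p => u p.1 + i (eB p.2) - u p.1 * i (eB p.2) with hwdef
  set w' : ιD × ιB → A := fun p => u p.1 + i (eB p.2) - i (eB p.2) * u p.1 with hw'def
  have hnorm3 : ∀ (x y : A), ‖x‖ ≤ K * CD → ‖y‖ ≤ Ci * CB →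
      ‖x + y - x * y‖ ≤ CR ∧ ‖x + y - y * x‖ ≤ CR := by
    intro x y hx hy
    have g2 : ‖x * y‖ ≤ K * CD * (Ci * CB) :=
      (norm_mul_le x y).trans (mul_le_mul hx hy (norm_nonneg _) (by positivity))
    have g3 : ‖y * x‖ ≤ K * CD * (Ci * CB) := by
      refine (norm_mul_le y x).trans ?_
      calc ‖y‖ * ‖x‖ ≤ (Ci * CB) * (K * CD) :=
            mul_le_mul hy hx (norm_nonneg _) (by positivity)
        _ = K * CD * (Ci * CB) := by ring
    constructor
    · calc ‖x + y - x * y‖ ≤ ‖x + y‖ + ‖x * y‖ := norm_sub_le _ _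
        _ ≤ ‖x‖ + ‖y‖ + ‖x * y‖ := by linarith [norm_add_le x y]
        _ ≤ CR := by rw [hCRdef]; linarith
    · calc ‖x + y - y * x‖ ≤ ‖x + y‖ + ‖y * x‖ := norm_sub_le _ _
        _ ≤ ‖x‖ + ‖y‖ + ‖y * x‖ := by linarith [norm_add_le x y]
        _ ≤ CR := by rw [hCRdef]; linarith
  have hwb : ∀ p, ‖w p‖ ≤ CR := fun p =>
    (hnorm3 (u p.1) (i (eB p.2)) (hu3 p.1) (hicb p.2)).1
  have hw'b : ∀ p, ‖w' p‖ ≤ CR := fun p =>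
    (hnorm3 (u p.1) (i (eB p.2)) (hu3 p.1) (hicb p.2)).2
  set E : ιD × ιB → A := fun p => w p + w' p - w p * w' p with hEdef
  have hEb : ∀ p, ‖E p‖ ≤ CR + CR + CR * CR := by
    intro p
    have g2 : ‖w p * w' p‖ ≤ CR * CR :=
      (norm_mul_le _ _).trans (mul_le_mul (hwb p) (hw'b p) (norm_nonneg _) hCR0)
    calc ‖E p‖ ≤ ‖w p + w' p‖ + ‖w p * w' p‖ := norm_sub_le _ _
      _ ≤ ‖w p‖ + ‖w' p‖ + ‖w p * w' p‖ := by linarith [norm_add_le (w p) (w' p)]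
      _ ≤ CR + CR + CR * CR := by linarith [hwb p, hw'b p]
  set l : Filter (ιD × ιB) := lD.bind (fun α => Filter.map (fun β => (α, β)) lB) with hldef
  have hlne : l.NeBot := by
    refine Filter.forall_mem_nonempty_iff_neBot.mp ?_
    intro s hs
    rw [hldef, Filter.mem_bind] at hs
    obtain ⟨t, ht, hts⟩ := hs
    obtain ⟨α, hα⟩ := Filter.nonempty_of_mem ht
    have hsm : s ∈ Filter.map (fun β => (α, β)) lB := hts α hα
    rw [Filter.mem_map] at hsm
    obtain ⟨β, hβ⟩ := Filter.nonempty_of_mem hsm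
    exact ⟨(α, β), hβ⟩
  -- the two one-sided smallness estimates
  have hwr : ∀ (a : A) (ε : ℝ), 0 < ε → ∀ᶠ p in l, ‖a * w p - a‖ ≤ ε := by
    intro a ε hε
    set M : ℝ := K * (1 + Ci * CB) with hM
    set δ : ℝ := (ε / 2) / (M + 1) with hδ
    have hδpos : 0 < δ := by positivity
    set δ₂ : ℝ := (ε / 2) / (Ci + 1) with hδ₂
    have hδ₂pos : 0 < δ₂ := by positivity
    have hmain1 : δ * (M + 1) = ε / 2 := by
      rw [hδ, div_mul_cancel₀ _ (by positivity : M + 1 ≠ 0)]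
    have hmain2 : δ₂ * (Ci + 1) = ε / 2 := by
      rw [hδ₂, div_mul_cancel₀ _ (by positivity : Ci + 1 ≠ 0)]
    rw [hldef, Filter.eventually_bind]
    have hevα : ∀ᶠ α in lD, ‖j a * eD α - j a‖ < δ :=
      (Metric.tendsto_nhds.mp (hDr (j a)) δ hδpos).mono
        (fun α h => by rwa [dist_eq_norm] at h)
    refine hevα.mono fun α hαs => ?_
    obtain ⟨b, hb⟩ := happrox (a * u α - a)
    have hrb : ‖(a * u α - a) - i b‖ ≤ K * δ := by
      refine hb.trans ?_
      have hjx : j (a * u α - a) = j a * eD α - j a := by rw [map_sub, map_mul, hju]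
      rw [hjx]
      exact mul_le_mul_of_nonneg_left hαs.le hKpos.le
    have hevβ : ∀ᶠ β in lB, ‖b * eB β - b‖ < δ₂ :=
      (Metric.tendsto_nhds.mp (hBr b) δ₂ hδ₂pos).mono
        (fun β h => by rwa [dist_eq_norm] at h)
    rw [Filter.eventually_map]
    refine hevβ.mono fun β hβs => ?_
    have hwp : w (α, β) = u α + i (eB β) - u α * i (eB β) := rfl
    have key : a * w (α, β) - a
        = (((a * u α - a) - i b) - ((a * u α - a) - i b) * i (eB β))
          + i (b - b * eB β) := by
      rw [hwp, map_sub, map_mul]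
      noncomm_ring
    rw [key]
    have h1 : ‖i (eB β)‖ ≤ Ci * CB := hicb β
    have h2 : ‖((a * u α - a) - i b) - ((a * u α - a) - i b) * i (eB β)‖
        ≤ K * δ * (1 + Ci * CB) := by
      have g1 := norm_sub_le ((a * u α - a) - i b) (((a * u α - a) - i b) * i (eB β))
      have g2 := norm_mul_le ((a * u α - a) - i b) (i (eB β))
      have g3 : ‖(a * u α - a) - i b‖ * ‖i (eB β)‖ ≤ (K * δ) * (Ci * CB) :=
        mul_le_mul hrb h1 (norm_nonneg _) (by positivity)
      calc ‖((a * u α - a) - i b) - ((a * u α - a) - i b) * i (eB β)‖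
          ≤ ‖(a * u α - a) - i b‖ + ‖(a * u α - a) - i b‖ * ‖i (eB β)‖ := by linarith
        _ ≤ K * δ + K * δ * (Ci * CB) := by linarith
        _ = K * δ * (1 + Ci * CB) := by ring
    have h3 : ‖i (b - b * eB β)‖ ≤ Ci * δ₂ := by
      refine (hi_norm _).trans (mul_le_mul_of_nonneg_left ?_ hCi0)
      rw [norm_sub_rev]
      exact hβs.le
    have e1 : K * δ * (1 + Ci * CB) ≤ ε / 2 := by
      calc K * δ * (1 + Ci * CB) = δ * M := by rw [hM]; ring
        _ ≤ δ * (M + 1) := mul_le_mul_of_nonneg_left (by linarith) hδpos.le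
        _ = ε / 2 := hmain1
    have e2 : Ci * δ₂ ≤ ε / 2 := by
      calc Ci * δ₂ = δ₂ * Ci := by ring
        _ ≤ δ₂ * (Ci + 1) := mul_le_mul_of_nonneg_left (by linarith) hδ₂pos.le
        _ = ε / 2 := hmain2
    calc ‖(((a * u α - a) - i b) - ((a * u α - a) - i b) * i (eB β)) + i (b - b * eB β)‖
        ≤ K * δ * (1 + Ci * CB) + Ci * δ₂ := (norm_add_le _ _).trans (add_le_add h2 h3)
      _ ≤ ε := by linarith
  have hw'l : ∀ (a : A) (ε : ℝ), 0 < ε → ∀ᶠ p in l, ‖w' p * a - a‖ ≤ ε := by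
    intro a ε hε
    set M : ℝ := K * (1 + Ci * CB) with hM
    set δ : ℝ := (ε / 2) / (M + 1) with hδ
    have hδpos : 0 < δ := by positivity
    set δ₂ : ℝ := (ε / 2) / (Ci + 1) with hδ₂
    have hδ₂pos : 0 < δ₂ := by positivity
    have hmain1 : δ * (M + 1) = ε / 2 := by
      rw [hδ, div_mul_cancel₀ _ (by positivity : M + 1 ≠ 0)]
    have hmain2 : δ₂ * (Ci + 1) = ε / 2 := by
      rw [hδ₂, div_mul_cancel₀ _ (by positivity : Ci + 1 ≠ 0)]
    rw [hldef, Filter.eventually_bind]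
    have hevα : ∀ᶠ α in lD, ‖eD α * j a - j a‖ < δ :=
      (Metric.tendsto_nhds.mp (hDl (j a)) δ hδpos).mono
        (fun α h => by rwa [dist_eq_norm] at h)
    refine hevα.mono fun α hαs => ?_
    obtain ⟨b, hb⟩ := happrox (u α * a - a)
    have hrb : ‖(u α * a - a) - i b‖ ≤ K * δ := by
      refine hb.trans ?_
      have hjx : j (u α * a - a) = eD α * j a - j a := by rw [map_sub, map_mul, hju]
      rw [hjx]
      exact mul_le_mul_of_nonneg_left hαs.le hKpos.le
    have hevβ : ∀ᶠ β in lB, ‖eB β * b - b‖ < δ₂ :=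
      (Metric.tendsto_nhds.mp (hBl b) δ₂ hδ₂pos).mono
        (fun β h => by rwa [dist_eq_norm] at h)
    rw [Filter.eventually_map]
    refine hevβ.mono fun β hβs => ?_
    have hwp : w' (α, β) = u α + i (eB β) - i (eB β) * u α := rfl
    have key : w' (α, β) * a - a
        = (((u α * a - a) - i b) - i (eB β) * ((u α * a - a) - i b))
          + i (b - eB β * b) := by
      rw [hwp, map_sub, map_mul]
      noncomm_ring
    rw [key]
    have h1 : ‖i (eB β)‖ ≤ Ci * CB := hicb β
    have h2 : ‖((u α * a - a) - i b) - i (eB β) * ((u α * a - a) - i b)‖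
        ≤ K * δ * (1 + Ci * CB) := by
      have g1 := norm_sub_le ((u α * a - a) - i b) (i (eB β) * ((u α * a - a) - i b))
      have g2 := norm_mul_le (i (eB β)) ((u α * a - a) - i b)
      have g3 : ‖i (eB β)‖ * ‖(u α * a - a) - i b‖ ≤ (Ci * CB) * (K * δ) :=
        mul_le_mul h1 hrb (norm_nonneg _) (by positivity)
      calc ‖((u α * a - a) - i b) - i (eB β) * ((u α * a - a) - i b)‖
          ≤ ‖(u α * a - a) - i b‖ + ‖i (eB β)‖ * ‖(u α * a - a) - i b‖ := by linarith
        _ ≤ K * δ + (Ci * CB) * (K * δ) := by linarith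
        _ = K * δ * (1 + Ci * CB) := by ring
    have h3 : ‖i (b - eB β * b)‖ ≤ Ci * δ₂ := by
      refine (hi_norm _).trans (mul_le_mul_of_nonneg_left ?_ hCi0)
      rw [norm_sub_rev]
      exact hβs.le
    have e1 : K * δ * (1 + Ci * CB) ≤ ε / 2 := by
      calc K * δ * (1 + Ci * CB) = δ * M := by rw [hM]; ring
        _ ≤ δ * (M + 1) := mul_le_mul_of_nonneg_left (by linarith) hδpos.le
        _ = ε / 2 := hmain1
    have e2 : Ci * δ₂ ≤ ε / 2 := by
      calc Ci * δ₂ = δ₂ * Ci := by ring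
        _ ≤ δ₂ * (Ci + 1) := mul_le_mul_of_nonneg_left (by linarith) hδ₂pos.le
        _ = ε / 2 := hmain2
    calc ‖(((u α * a - a) - i b) - i (eB β) * ((u α * a - a) - i b)) + i (b - eB β * b)‖
        ≤ K * δ * (1 + Ci * CB) + Ci * δ₂ := (norm_add_le _ _).trans (add_le_add h2 h3)
      _ ≤ ε := by linarith
  refine ⟨ιD × ιB, l, E, hlne, ⟨CR + CR + CR * CR, hEb⟩, ?_, ?_⟩
  · intro a
    rw [Metric.tendsto_nhds]
    intro ε hε
    refine (hwr a (ε / 2 / (1 + CR)) (by positivity)).mono fun p hp => ?_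
    rw [dist_eq_norm]
    have key : a * E p - a = (a * w p - a) - (a * w p - a) * w' p := by
      rw [hEdef]; noncomm_ring
    have g1 := norm_sub_le (a * w p - a) ((a * w p - a) * w' p)
    have g2 := norm_mul_le (a * w p - a) (w' p)
    calc ‖a * E p - a‖ = ‖(a * w p - a) - (a * w p - a) * w' p‖ := by rw [key]
      _ ≤ ‖a * w p - a‖ + ‖a * w p - a‖ * ‖w' p‖ := by linarith
      _ = ‖a * w p - a‖ * (1 + ‖w' p‖) := by ring
      _ ≤ (ε / 2 / (1 + CR)) * (1 + CR) :=
          mul_le_mul hp (by linarith [hw'b p]) (by positivity) (by positivity)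
      _ = ε / 2 := div_mul_cancel₀ _ (by positivity : (1:ℝ) + CR ≠ 0)
      _ < ε := by linarith
  · intro a
    rw [Metric.tendsto_nhds]
    intro ε hε
    refine (hw'l a (ε / 2 / (1 + CR)) (by positivity)).mono fun p hp => ?_
    rw [dist_eq_norm]
    have key : E p * a - a = (w' p * a - a) - w p * (w' p * a - a) := by
      rw [hEdef]; noncomm_ring
    have g1 := norm_sub_le (w' p * a - a) (w p * (w' p * a - a))
    have g2 := norm_mul_le (w p) (w' p * a - a)
    calc ‖E p * a - a‖ = ‖(w' p * a - a) - w p * (w' p * a - a)‖ := by rw [key]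
      _ ≤ ‖w' p * a - a‖ + ‖w p‖ * ‖w' p * a - a‖ := by linarith
      _ = ‖w' p * a - a‖ * (1 + ‖w p‖) := by ring
      _ ≤ (ε / 2 / (1 + CR)) * (1 + CR) :=
          mul_le_mul hp (by linarith [hwb p]) (by positivity) (by positivity)
      _ = ε / 2 := div_mul_cancel₀ _ (by positivity : (1:ℝ) + CR ≠ 0)
      _ < ε := by linarith

/-- For an extension 0 → B →^i A →^j D → 0 of Banach algebras in which
both B and D have bounded approximate identities (e.g. an extension of C*-algebras),
the Bar cohomology groups satisfy HR^n(A) = HR^n(D) for all n ≥ 0: in fact both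
vanish, i.e. the duals of the bar complexes of both D and A are exact. -/
theorem bar_cohomology_of_extension
    {B A D : Type*}
    [NormedRing B] [NormedAlgebra ℝ B] [CompleteSpace B]
    [NormedRing A] [NormedAlgebra ℝ A] [CompleteSpace A]
    [NormedRing D] [NormedAlgebra ℝ D] [CompleteSpace D]
    (i : B →ₐ[ℝ] A) (j : A →ₐ[ℝ] D)
    (hi_cont : Continuous i) (hj_cont : Continuous j)
    (hi : Function.Injective i) (hj : Function.Surjective j)
    (hexact : ∀ a : A, j a = 0 ↔ ∃ b, i b = a)
    (hB : HasBoundedApproxIdentity B) (hD : HasBoundedApproxIdentity D)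
    -- the bar complex of A
    (TA : ℕ → Type)
    [∀ n, NormedAddCommGroup (TA n)] [∀ n, NormedSpace ℝ (TA n)] [∀ n, CompleteSpace (TA n)]
    (φA : ∀ n, ContinuousMultilinearMap ℝ (fun _ : Fin (n + 1) => A) (TA n))
    (hTA : ∀ n, IsProjectiveTensorPower A (n + 1) (TA n) (φA n))
    (drA : ∀ n, TA (n + 1) →L[ℝ] TA n)
    (hdrA : ∀ n (v : Fin (n + 2) → A),
      drA n (φA (n + 1) v) = ∑ k : Fin (n + 1), ((-1 : ℝ) ^ (k : ℕ)) • φA n (hochschildFace v k))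
    -- the bar complex of D
    (TD : ℕ → Type)
    [∀ n, NormedAddCommGroup (TD n)] [∀ n, NormedSpace ℝ (TD n)] [∀ n, CompleteSpace (TD n)]
    (φD : ∀ n, ContinuousMultilinearMap ℝ (fun _ : Fin (n + 1) => D) (TD n))
    (hTD : ∀ n, IsProjectiveTensorPower D (n + 1) (TD n) (φD n))
    (drD : ∀ n, TD (n + 1) →L[ℝ] TD n)
    (hdrD : ∀ n (v : Fin (n + 2) → D),
      drD n (φD (n + 1) v) = ∑ k : Fin (n + 1), ((-1 : ℝ) ^ (k : ℕ)) • φD n (hochschildFace v k)) :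
    -- HR^n(D) = 0 for all n …
    (Function.Injective (fun f : StrongDual ℝ (TD 0) => f.comp (drD 0)) ∧
      ∀ n (g : StrongDual ℝ (TD (n + 1))), g.comp (drD (n + 1)) = 0 →
        ∃ f : StrongDual ℝ (TD n), f.comp (drD n) = g) ∧
    -- … hence HR^n(A) = HR^n(D) = 0 for all n
    (Function.Injective (fun f : StrongDual ℝ (TA 0) => f.comp (drA 0)) ∧
      ∀ n (g : StrongDual ℝ (TA (n + 1))), g.comp (drA (n + 1)) = 0 →
        ∃ f : StrongDual ℝ (TA n), f.comp (drA n) = g) := by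
  have hA : HasBoundedApproxIdentity A :=
    hasBAI_of_extension i j hi_cont hj_cont hj hexact hB hD
  exact ⟨bar_exact_of_bai hD TD φD hTD drD hdrD, bar_exact_of_bai hA TA φA hTA drA hdrA⟩

end
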